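/- If a PVM Q = {Q_y} (orthogonal projections summing to the identity) is a classical post-processing of a POVM P = {P_x} via a conditional probability distribution p(y|x), i.e., Q_y = Σ_x p(y|x) P_x for all y, then the post-processing is deterministic: p(y|x) ∈ {0,1} for all x, y (whenever P_x ≠ 0). -/

import Mathlib

open Matrix BigOperators Filter
open scoped ComplexOrder Kronecker Classical

abbrev Mat (d : ℕ) := Matrix (Fin d) (Fin d) ℂ

def IsPOVM {X : Type*} [Fintype X] {d : ℕ} (P : X → Mat d) : Prop :=
  (∀ x, (P x).PosSemidef) ∧ ∑ x, P x = 1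

def IsPVM {X : Type*} [Fintype X] {d : ℕ} (P : X → Mat d) : Prop :=
  IsPOVM P ∧ (∀ x, P x * P x = P x) ∧ ∀ x y, x ≠ y → P x * P y = 0

def IsDensity {d : ℕ} (ρ : Mat d) : Prop := ρ.PosSemidef ∧ ρ.trace = 1

/-- `Q ⪯ P`: `Q` is a classical post-processing of `P`. -/
def IsPostProcessingOf {Y X : Type*} [Fintype Y] [Fintype X] {d : ℕ}
    (Q : Y → Mat d) (P : X → Mat d) : Prop :=
  ∃ p : X → Y → ℝ, (∀ x y, 0 ≤ p x y) ∧ (∀ x, ∑ y, p x y = 1) ∧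
    ∀ y, Q y = ∑ x, (p x y : ℂ) • P x

/-- if a PVM `Q` is a classical post-processing of a POVM `P` via a
conditional probability `p`, the post-processing is deterministic wherever `P x ≠ 0`. -/
lemma psd_trace_nonneg {d : ℕ} {A : Mat d} (hA : A.PosSemidef) : 0 ≤ A.trace := by
  rw [Matrix.trace]
  apply Finset.sum_nonneg
  intro i _
  have := hA.dotProduct_mulVec_nonneg (Pi.single i 1)
  simpa [dotProduct, Matrix.mulVec, Pi.single_apply, Matrix.diag] using this

open scoped MatrixOrder in
lemma psd_exists_conjTranspose_mul_self {d : ℕ} {A : Mat d} (hA : A.PosSemidef) :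
    ∃ C : Mat d, A = Cᴴ * C := by
  obtain ⟨X, hX, -, hXX⟩ := CFC.exists_sqrt_of_isSelfAdjoint_of_quasispectrumRestricts
    hA.isHermitian (QuasispectrumRestricts.nnreal_of_nonneg hA.nonneg)
  exact ⟨X, by rw [← hXX, ← Matrix.star_eq_conjTranspose, hX.star_eq]⟩

lemma psd_trace_mul_nonneg {d : ℕ} {A B : Mat d} (hA : A.PosSemidef) (hB : B.PosSemidef) :
    0 ≤ (A * B).trace := by
  obtain ⟨C, hC⟩ := psd_exists_conjTranspose_mul_self hA
  rw [hC, Matrix.mul_assoc, Matrix.trace_mul_comm]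
  exact psd_trace_nonneg (hB.mul_mul_conjTranspose_same C)

lemma psd_trace_eq_zero {d : ℕ} {A : Mat d} (hA : A.PosSemidef) (h : A.trace = 0) : A = 0 := by
  obtain ⟨C, hC⟩ := psd_exists_conjTranspose_mul_self hA
  subst hC
  rw [show (Cᴴ * C).trace = ∑ i, ∑ j, star (C j i) * C j i by
    simp [Matrix.trace, Matrix.mul_apply, Matrix.conjTranspose_apply, Matrix.diag]] at h
  have hC0 : C = 0 := by
    ext j i
    have h1 := (Finset.sum_eq_zero_iff_of_nonneg (fun i _ =>
      Finset.sum_nonneg fun j _ => star_mul_self_nonneg (C j i))).mp h i (Finset.mem_univ i)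
    have h2 := (Finset.sum_eq_zero_iff_of_nonneg (fun j _ =>
      star_mul_self_nonneg (C j i))).mp h1 j (Finset.mem_univ j)
    rw [Complex.star_def, ← Complex.normSq_eq_conj_mul_self] at h2
    exact_mod_cast Complex.normSq_eq_zero.mp (by exact_mod_cast h2)
  simp [hC0]

lemma psd_smul' {d : ℕ} {c : ℝ} (hc : 0 ≤ c) {A : Mat d} (hA : A.PosSemidef) :
    ((c : ℂ) • A).PosSemidef := by
  refine Matrix.PosSemidef.of_dotProduct_mulVec_nonneg ?_ ?_
  · show ((c : ℂ) • A)ᴴ = _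
    rw [Matrix.conjTranspose_smul, hA.1.eq, Complex.star_def, Complex.conj_ofReal]
  · intro v
    rw [Matrix.smul_mulVec, dotProduct_smul, smul_eq_mul]
    exact mul_nonneg (by exact_mod_cast hc) (hA.dotProduct_mulVec_nonneg v)

theorem pvm_post_processing_deterministic {X Y : Type*} [Fintype X] [Fintype Y] {d : ℕ}
    (P : X → Mat d) (Q : Y → Mat d) (p : X → Y → ℝ)
    (hP : IsPOVM P) (hQ : IsPVM Q)
    (hp0 : ∀ x y, 0 ≤ p x y) (hp1 : ∀ x, ∑ y, p x y = 1)
    (hpost : ∀ y, Q y = ∑ x, (p x y : ℂ) • P x) :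
    ∀ x y, P x ≠ 0 → p x y = 0 ∨ p x y = 1 := by
  obtain ⟨hP1, hP2⟩ := hP
  obtain ⟨⟨hQ1, _⟩, hQproj, _⟩ := hQ
  have hP : (∀ x, (P x).PosSemidef) ∧ ∑ x, P x = 1 := ⟨hP1, hP2⟩

  intro x0 y0 hne
  rcases eq_or_ne (p x0 y0) 0 with h0 | h0
  · exact Or.inl h0
  rcases eq_or_ne (p x0 y0) 1 with h1 | h1
  · exact Or.inr h1
  exfalso
  have hproj : Q y0 * Q y0 = Q y0 := hQproj y0
  have hQpsd : (Q y0).PosSemidef := hQ1 y0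
  have hple : ∀ x, p x y0 ≤ 1 := fun x => by
    rw [← hp1 x]
    exact Finset.single_le_sum (fun y _ => hp0 x y) (Finset.mem_univ y0)
  have hcompl : (1 : Mat d) - Q y0 = ∑ x, ((1 - p x y0 : ℝ) : ℂ) • P x := by
    rw [hpost y0, ← hP.2, ← Finset.sum_sub_distrib]
    refine Finset.sum_congr rfl fun x _ => ?_
    push_cast
    rw [sub_smul, one_smul]
  have hcpsd : ((1 : Mat d) - Q y0).PosSemidef := by
    rw [hcompl]
    exact Finset.sum_induction _ _ (fun a b ha hb => ha.add hb) .zero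
      (fun x _ => psd_smul' (by linarith [hple x]) (hP.1 x))
  -- first key sum
  have hexp1 : (∑ x, ((p x y0 : ℝ) : ℂ) * (P x * ((1 : Mat d) - Q y0)).trace) = 0 := by
    have hz : (Q y0 * ((1 : Mat d) - Q y0)).trace = 0 := by
      rw [mul_sub, mul_one, hproj, sub_self, Matrix.trace_zero]
    rw [← hz, hpost y0, Finset.sum_mul]
    simp_rw [smul_mul_assoc, Matrix.trace_sum, Matrix.trace_smul, smul_eq_mul]
  have hexp2 : (∑ x, ((1 - p x y0 : ℝ) : ℂ) * (P x * Q y0).trace) = 0 := by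
    have hz : (((1 : Mat d) - Q y0) * Q y0).trace = 0 := by
      rw [sub_mul, one_mul, hproj, sub_self, Matrix.trace_zero]
    rw [← hz, hcompl, Finset.sum_mul]
    simp_rw [smul_mul_assoc, Matrix.trace_sum, Matrix.trace_smul, smul_eq_mul]
  have hterm1 : ((p x0 y0 : ℝ) : ℂ) * (P x0 * ((1 : Mat d) - Q y0)).trace = 0 :=
    (Finset.sum_eq_zero_iff_of_nonneg (fun x _ =>
      mul_nonneg (by exact_mod_cast hp0 x y0)
        (psd_trace_mul_nonneg (hP.1 x) hcpsd))).mp hexp1 x0 (Finset.mem_univ x0)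
  have hterm2 : ((1 - p x0 y0 : ℝ) : ℂ) * (P x0 * Q y0).trace = 0 :=
    (Finset.sum_eq_zero_iff_of_nonneg (fun x _ =>
      mul_nonneg (by exact_mod_cast sub_nonneg.mpr (hple x))
        (psd_trace_mul_nonneg (hP.1 x) hQpsd))).mp hexp2 x0 (Finset.mem_univ x0)
  have tr1 : (P x0 * ((1 : Mat d) - Q y0)).trace = 0 := by
    rcases mul_eq_zero.mp hterm1 with h | h
    · exact absurd (by exact_mod_cast h) h0
    · exact h
  have tr2 : (P x0 * Q y0).trace = 0 := by
    rcases mul_eq_zero.mp hterm2 with h | h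
    · have : (1 : ℝ) - p x0 y0 = 0 := by exact_mod_cast h
      exact absurd (by linarith) h1
    · exact h
  have htr : (P x0).trace = 0 := by
    have : P x0 = P x0 * Q y0 + P x0 * ((1 : Mat d) - Q y0) := by
      rw [← mul_add, add_sub_cancel, mul_one]
    rw [this, Matrix.trace_add, tr1, tr2, add_zero]
  exact hne (psd_trace_eq_zero (hP.1 x0) htr)
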